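/- arXiv:1705.05255 — 3 statements merged into one kernel-verified Lean document; each statement's English description precedes it below -/
import Mathlib

section
/- For any integer K ≥ 1, K + Σ_{j=2}^{K} C(K,j) · ∏_{t=2}^{j} (t-1)/(K-t+1) = K · Σ_{j=1}^{K} 1/j. -/
lemma aux_term (K : ℕ) : ∀ j : ℕ, 1 ≤ j → j ≤ K →
    (K.choose j : ℝ) * ∏ t ∈ Finset.Icc 2 j, ((t : ℝ) - 1) / ((K : ℝ) - (t : ℝ) + 1)
      = (K : ℝ) / (j : ℝ) := by
  intro j
  induction j with
  | zero => intro h; omega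
  | succ n ih =>
    intro _ hle
    rcases Nat.eq_or_lt_of_le (show 1 ≤ n + 1 from Nat.le_add_left 1 n) with h1 | h1
    · have hn : n = 0 := by omega
      subst hn
      simp [Finset.Icc_eq_empty_of_lt]
    · have hn1 : 1 ≤ n := by omega
      have hnK : n ≤ K := by omega
      have hprod : Finset.Icc 2 (n + 1) = insert (n + 1) (Finset.Icc 2 n) := by
        ext x; simp [Finset.mem_Icc]; omega
      rw [hprod, Finset.prod_insert (by simp)]
      have hchoose : (K.choose (n+1) : ℝ) * ((n:ℝ) + 1) = (K.choose n : ℝ) * ((K:ℝ) - n) := by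
        have h2 : K.choose (n+1) * (n+1) = K.choose n * (K - n) := by
          rw [Nat.choose_succ_right_eq]
        calc (K.choose (n+1) : ℝ) * ((n:ℝ) + 1)
            = ((K.choose (n+1) * (n+1) : ℕ) : ℝ) := by push_cast; ring
          _ = ((K.choose n * (K - n) : ℕ) : ℝ) := by rw [h2]
          _ = (K.choose n : ℝ) * ((K:ℝ) - n) := by push_cast [Nat.cast_sub hnK]; ring
      have hKn : (K:ℝ) - (n:ℝ) ≠ 0 := by
        have : (n:ℝ) + 1 ≤ (K:ℝ) := by exact_mod_cast hle
        intro h; nlinarith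
      have hn0 : (n:ℝ) ≠ 0 := by exact_mod_cast (by omega : n ≠ 0)
      have hn10 : (n:ℝ) + 1 ≠ 0 := by positivity
      have ihv := ih hn1 hnK
      have key : (K.choose (n+1) : ℝ) = (K.choose n : ℝ) * ((K:ℝ) - n) / ((n:ℝ) + 1) := by
        field_simp; linarith [hchoose]
      rw [key]
      push_cast
      have hterm : ((n:ℝ) + 1 - 1) / ((K:ℝ) - ((n:ℝ)+1) + 1) = (n:ℝ) / ((K:ℝ) - n) := by
        ring_nf
      rw [hterm]
      set P := ∏ t ∈ Finset.Icc 2 n, ((t : ℝ) - 1) / ((K : ℝ) - (t : ℝ) + 1) with hP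
      have step : (K.choose n : ℝ) * ((K:ℝ) - n) / ((n:ℝ) + 1) * ((n:ℝ) / ((K:ℝ) - n) * P)
          = ((K.choose n : ℝ) * P) * ((n:ℝ) * (((K:ℝ) - n) / (((n:ℝ)+1) * ((K:ℝ) - n)))) := by
        field_simp
      rw [step, ihv]
      field_simp
  
/-- For any integer `K ≥ 1`,
`K + Σ_{j=2}^{K} C(K,j) · ∏_{t=2}^{j} (t-1)/(K-t+1) = K · Σ_{j=1}^{K} 1/j`. -/
theorem stmt0 (K : ℕ) (hK : 1 ≤ K) :
    (K : ℝ) + ∑ j ∈ Finset.Icc 2 K, (K.choose j : ℝ) *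
        ∏ t ∈ Finset.Icc 2 j, ((t : ℝ) - 1) / ((K : ℝ) - (t : ℝ) + 1)
      = (K : ℝ) * ∑ j ∈ Finset.Icc 1 K, (1 : ℝ) / (j : ℝ) := by
  have hsum : ∑ j ∈ Finset.Icc 2 K, (K.choose j : ℝ) *
        ∏ t ∈ Finset.Icc 2 j, ((t : ℝ) - 1) / ((K : ℝ) - (t : ℝ) + 1)
      = ∑ j ∈ Finset.Icc 2 K, (K : ℝ) / (j : ℝ) := by
    apply Finset.sum_congr rfl
    intro j hj
    simp only [Finset.mem_Icc] at hj
    exact aux_term K j (by omega) hj.2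
  rw [hsum, Finset.mul_sum]
  have hins : Finset.Icc 1 K = insert 1 (Finset.Icc 2 K) := by
    ext x; simp [Finset.mem_Icc]; omega
  rw [hins, Finset.sum_insert (by simp)]
  simp [div_eq_mul_inv, mul_comm]
end

section
/- Fix K ≥ 1 and a function δ from subsets of {1,…,K} to reals with δ_A < 1 for all A. Suppose μ : (nonempty subsets of {1,…,K}) → ℝ satisfies, for every set J with min element k* and |J| ≥ 2: Σ_{I : k* ∈ I ⊆ J} μ_I = (1 - δ_{J̄ ∪ {k*}})^{-1} · Σ_{∅ ≠ U ⊆ J∖{k*}} (-1)^{|U|+1} (1 - δ_{J̄ ∪ {k*} ∪ U}) · Σ_{I : k* ∈ I ⊆ J∖U} μ_I, where J̄ = {1,…,K}∖J. If moreover δ depends only on set cardinality (symmetric case), then for every k and every W with k ∈ W ⊆ {k, k+1, …, K}: Σ_{I : k ∈ I ⊆ W} μ_I = (1 - δ_{{1,…,K}}) μ_{{k}} / (1 - δ_{({1,…,K}∖W) ∪ {k}}). -/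
lemma alt_sum_nonempty {α : Type*} [DecidableEq α] (s : Finset α) (hs : s.Nonempty) :
    ∑ U ∈ s.powerset.filter (fun U => U.Nonempty), (-1 : ℝ) ^ (U.card + 1) = 1 := by
  have h0 : (∑ m ∈ s.powerset, (-1 : ℝ) ^ m.card) = 0 := by
    have := Finset.sum_powerset_neg_one_pow_card_of_nonempty hs
    have : ((∑ m ∈ s.powerset, (-1 : ℤ) ^ m.card : ℤ) : ℝ) = 0 := by rw [this]; norm_num
    push_cast at this
    exact this
  have hsplit := Finset.sum_filter_add_sum_filter_not s.powerset
    (fun U => U.Nonempty) (fun U => (-1 : ℝ) ^ (U.card + 1))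
  have hempty : s.powerset.filter (fun U => ¬ U.Nonempty) = {∅} := by
    ext U
    simp [Finset.not_nonempty_iff_eq_empty]
    rintro rfl; exact Finset.empty_subset _
  rw [hempty] at hsplit
  have h1 : (∑ m ∈ s.powerset, (-1 : ℝ) ^ (m.card + 1)) = 0 := by
    have : (∑ m ∈ s.powerset, (-1 : ℝ) ^ (m.card + 1))
        = -∑ m ∈ s.powerset, (-1 : ℝ) ^ m.card := by
      rw [← Finset.sum_neg_distrib]
      exact Finset.sum_congr rfl (fun m _ => by ring)
    rw [this, h0, neg_zero]
  simp only [Finset.sum_singleton, Finset.card_empty] at hsplit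
  have := hsplit.trans h1
  norm_num at this
  linarith

/-- Lemma 2 (recursion lemma): if `μ` satisfies the inclusion–exclusion recursion for
every `J` with `|J| ≥ 2` (with `k* = min J`), and `δ` is symmetric (depends only on
cardinality) with `δ_A < 1`, then for every `k` and `W` with `k ∈ W ⊆ {k,…,K}`,
`Σ_{k∈I⊆W} μ_I = (1 - δ_{univ}) μ_{{k}} / (1 - δ_{W̄∪{k}})`. -/
theorem stmt7 (K : ℕ) (hK : 1 ≤ K)
    (δ : Finset (Fin K) → ℝ) (hδ : ∀ A, δ A < 1)
    (hsym : ∀ A B : Finset (Fin K), A.card = B.card → δ A = δ B)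
    (μ : Finset (Fin K) → ℝ)
    (hrec : ∀ (J : Finset (Fin K)) (hJ : 2 ≤ J.card),
      ∑ I ∈ J.powerset.filter
          (fun I => J.min' (Finset.card_pos.mp (by omega)) ∈ I), μ I
        = (1 - δ (Jᶜ ∪ {J.min' (Finset.card_pos.mp (by omega))}))⁻¹ *
          ∑ U ∈ (J.erase (J.min' (Finset.card_pos.mp (by omega)))).powerset.filter
              (fun U => U.Nonempty),
            (-1 : ℝ) ^ (U.card + 1) *
              (1 - δ (Jᶜ ∪ {J.min' (Finset.card_pos.mp (by omega))} ∪ U)) *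
              ∑ I ∈ (J \ U).powerset.filter
                  (fun I => J.min' (Finset.card_pos.mp (by omega)) ∈ I), μ I) :
    ∀ (k : Fin K) (W : Finset (Fin K)), k ∈ W → (∀ i ∈ W, k ≤ i) →
      ∑ I ∈ W.powerset.filter (fun I => k ∈ I), μ I
        = (1 - δ Finset.univ) * μ {k} / (1 - δ (Wᶜ ∪ {k})) := by
  intro k W
  induction W using Finset.strongInduction with
  | _ W ih =>
  intro hkW hle
  have hne : ∀ A, (1 : ℝ) - δ A ≠ 0 := fun A => by have := hδ A; intro h; linarith
  have hmin : ∀ (h : W.Nonempty), W.min' h = k := fun h =>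
    le_antisymm (Finset.min'_le W k hkW) (hle _ (Finset.min'_mem W h))
  rcases eq_or_lt_of_le (Finset.one_le_card.mpr ⟨k, hkW⟩) with hc1 | hc2
  · -- |W| = 1, so W = {k}
    obtain ⟨a, rfl⟩ := Finset.card_eq_one.mp hc1.symm
    have hak : k = a := by simpa using hkW
    subst hak
    have hPW : ({k} : Finset (Fin K)).powerset.filter (fun I => k ∈ I) = {{k}} := by
      ext I
      simp only [Finset.mem_filter, Finset.mem_powerset, Finset.subset_singleton_iff,
        Finset.mem_singleton]
      constructor
      · rintro ⟨rfl | rfl, h2⟩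
        · simp at h2
        · rfl
      · rintro rfl
        exact ⟨Or.inr rfl, Finset.mem_singleton_self k⟩
    rw [hPW]
    have huniv : ({k} : Finset (Fin K))ᶜ ∪ {k} = Finset.univ := by
      ext x; by_cases hx : x = k <;> simp [hx]
    rw [huniv, Finset.sum_singleton, mul_comm (1 - δ Finset.univ) (μ {k}), mul_div_assoc,
      div_self (hne _), mul_one]
  · -- |W| ≥ 2
    have hc : 2 ≤ W.card := hc2
    have hrw := hrec W hc
    simp only [hmin] at hrw
    rw [hrw]
    have hstep : ∀ U ∈ (W.erase k).powerset.filter (fun U => U.Nonempty),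
        (-1 : ℝ) ^ (U.card + 1) * (1 - δ (Wᶜ ∪ {k} ∪ U)) *
          ∑ I ∈ (W \ U).powerset.filter (fun I => k ∈ I), μ I
        = (-1 : ℝ) ^ (U.card + 1) * ((1 - δ Finset.univ) * μ {k}) := by
      intro U hU
      rw [Finset.mem_filter, Finset.mem_powerset] at hU
      obtain ⟨hUsub, hUne⟩ := hU
      have hUW : U ⊆ W := hUsub.trans (Finset.erase_subset _ _)
      have hkU : k ∉ U := fun h => Finset.notMem_erase k W (hUsub h)
      have hss : W \ U ⊂ W := by
        refine Finset.ssubset_iff_of_subset (Finset.sdiff_subset) |>.mpr ?_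
        obtain ⟨u, hu⟩ := hUne
        exact ⟨u, hUW hu, by simp [hu]⟩
      have hkWU : k ∈ W \ U := Finset.mem_sdiff.mpr ⟨hkW, hkU⟩
      have hIH := ih (W \ U) hss hkWU (fun i hi => hle i (Finset.mem_sdiff.mp hi).1)
      have hcompl : (W \ U)ᶜ ∪ {k} = Wᶜ ∪ {k} ∪ U := by
        ext x
        simp only [Finset.mem_union, Finset.mem_compl, Finset.mem_sdiff,
          Finset.mem_singleton]
        constructor
        · rintro (hx | rfl)
          · by_cases hxU : x ∈ U
            · right; exact hxU
            · left; left; intro hxW; exact hx ⟨hxW, hxU⟩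
          · left; right; rfl
        · rintro ((hx | rfl) | hx)
          · left; intro h; exact hx h.1
          · right; rfl
          · left; intro h; exact h.2 hx
      rw [hIH, ← hcompl, mul_assoc, mul_comm (1 - δ ((W \ U)ᶜ ∪ {k})),
        div_mul_cancel₀ _ (hne _)]
    rw [Finset.sum_congr rfl hstep, ← Finset.sum_mul,
      alt_sum_nonempty _ (by rw [← Finset.card_pos, Finset.card_erase_of_mem hkW]; omega),
      one_mul, inv_mul_eq_div]
end

section
/- Let K ≥ 2 and for t = 1,…,K define a_t(snr) = (K - t + 1)·log(snr) + O(1) and for 2 ≤ t ≤ K define Σ_{l≤t} b_{l,t}(snr) = (t-1)·log(snr) + O(1) as snr → ∞. Then lim_{snr→∞} [ (K + Σ_{j=2}^{K} C(K,j) ∏_{t=2}^{j} (Σ_{l≤t} b_{l,t})/a_t )^{-1} · a_1 ] / log(snr) = (Σ_{j=1}^{K} 1/j)^{-1}. -/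
open Filter

lemma aux_log (f : ℝ → ℝ) (c C : ℝ)
    (h : ∀ᶠ s in atTop, |f s - c * Real.log s| ≤ C) :
    Tendsto (fun s => f s / Real.log s) atTop (nhds c) := by
  have hlog : Tendsto Real.log atTop atTop := Real.tendsto_log_atTop
  have h0 : Tendsto (fun s => (f s - c * Real.log s) / Real.log s) atTop (nhds 0) := by
    refine squeeze_zero_norm' ?_ (Tendsto.div_atTop (tendsto_const_nhds (x := C)) hlog)
    filter_upwards [h, hlog.eventually_ge_atTop 1] with s hs hl
    have hpos : (0:ℝ) < Real.log s := by linarith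
    rw [norm_div, Real.norm_eq_abs, Real.norm_eq_abs, abs_of_pos hpos]
    gcongr
  have h1 := h0.add (tendsto_const_nhds (x := c))
  rw [zero_add] at h1
  apply h1.congr'
  filter_upwards [hlog.eventually_ge_atTop 1] with s hl
  have : Real.log s ≠ 0 := by linarith
  field_simp
  ring

lemma aux_prod (K j : ℕ) (hK : 1 ≤ K) (h1 : 1 ≤ j) (hj : j ≤ K) :
    ∏ t ∈ Finset.Icc 2 j, (((t:ℝ) - 1) / ((K:ℝ) - (t:ℝ) + 1))
      = ((K:ℝ) / (j:ℝ)) / (K.choose j : ℝ) := by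
  induction j, h1 using Nat.le_induction with
  | base =>
    rw [Finset.Icc_eq_empty (by omega), Finset.prod_empty, Nat.choose_one_right]
    have : (K:ℝ) ≠ 0 := Nat.cast_ne_zero.mpr (by omega)
    field_simp
    norm_num
  | succ j hj1 ih =>
    rw [Finset.prod_Icc_succ_top (by omega : 2 ≤ j + 1), ih (by omega)]
    have hjK : j < K := by omega
    have key : (K.choose (j+1) : ℝ) * ((j:ℝ) + 1) = (K.choose j : ℝ) * ((K:ℝ) - (j:ℝ)) := by
      have h2 := congrArg (Nat.cast : ℕ → ℝ) (Nat.choose_succ_right_eq K j)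
      push_cast [hjK.le] at h2
      linarith
    have hc1 : (K.choose j : ℝ) ≠ 0 := Nat.cast_ne_zero.mpr (Nat.choose_pos hjK.le).ne'
    have hc2 : (K.choose (j+1) : ℝ) ≠ 0 := Nat.cast_ne_zero.mpr (Nat.choose_pos (by omega)).ne'
    have hjne : (j:ℝ) ≠ 0 := Nat.cast_ne_zero.mpr (by omega)
    have hKj : (K:ℝ) - (j:ℝ) ≠ 0 := by
      have : (j:ℝ) < (K:ℝ) := Nat.cast_lt.mpr hjK
      linarith
    push_cast
    have e1 : (j:ℝ) + 1 - 1 = (j:ℝ) := by ring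
    have e2 : (K:ℝ) - ((j:ℝ) + 1) + 1 = (K:ℝ) - (j:ℝ) := by ring
    rw [e1, e2, div_div, div_div, div_mul_div_comm,
      div_eq_div_iff (mul_ne_zero (mul_ne_zero hjne hc1) hKj)
        (mul_ne_zero (by positivity) hc2)]
    linear_combination (K:ℝ) * (j:ℝ) * key

/-- High-SNR DoF of the JSC scheme: with `a_t(s) = (K-t+1)·log s + O(1)` and
`Σ_{l≤t} b_{l,t}(s) = (t-1)·log s + O(1)`, the symmetric rate
`(K + Σ_j C(K,j) ∏_t B_t/a_t)⁻¹ a_1` has prelog `(Σ_{j=1}^K 1/j)⁻¹`. -/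
theorem stmt14 (K : ℕ) (hK : 2 ≤ K) (a B : ℕ → ℝ → ℝ)
    (ha : ∀ t ∈ Finset.Icc 1 K, ∃ C : ℝ, ∀ᶠ s in Filter.atTop,
      |a t s - ((K : ℝ) - (t : ℝ) + 1) * Real.log s| ≤ C)
    (hB : ∀ t ∈ Finset.Icc 2 K, ∃ C : ℝ, ∀ᶠ s in Filter.atTop,
      |B t s - ((t : ℝ) - 1) * Real.log s| ≤ C) :
    Filter.Tendsto
      (fun s => ((K : ℝ) + ∑ j ∈ Finset.Icc 2 K, (K.choose j : ℝ) *
          ∏ t ∈ Finset.Icc 2 j, B t s / a t s)⁻¹ * a 1 s / Real.log s)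
      Filter.atTop
      (nhds ((∑ j ∈ Finset.Icc 1 K, (1 : ℝ) / (j : ℝ))⁻¹)) := by
  have hlog : Tendsto Real.log atTop atTop := Real.tendsto_log_atTop
  -- limits of a t / log and B t / log
  have haL : ∀ t ∈ Finset.Icc 1 K,
      Tendsto (fun s => a t s / Real.log s) atTop (nhds ((K:ℝ) - (t:ℝ) + 1)) := by
    intro t ht
    obtain ⟨C, hC⟩ := ha t ht
    exact aux_log _ _ C hC
  have hBL : ∀ t ∈ Finset.Icc 2 K,
      Tendsto (fun s => B t s / Real.log s) atTop (nhds ((t:ℝ) - 1)) := by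
    intro t ht
    obtain ⟨C, hC⟩ := hB t ht
    exact aux_log _ _ C hC
  -- ratio limits
  have hratio : ∀ t ∈ Finset.Icc 2 K,
      Tendsto (fun s => B t s / a t s) atTop (nhds (((t:ℝ) - 1) / ((K:ℝ) - (t:ℝ) + 1))) := by
    intro t ht
    rw [Finset.mem_Icc] at ht
    have htK : (t:ℝ) ≤ (K:ℝ) := Nat.cast_le.mpr ht.2
    have hne : (K:ℝ) - (t:ℝ) + 1 ≠ 0 := by linarith
    have h := (hBL t (Finset.mem_Icc.mpr ht)).div
      (haL t (Finset.mem_Icc.mpr ⟨by omega, ht.2⟩)) hne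
    apply h.congr'
    filter_upwards [hlog.eventually_ge_atTop 1] with s hl
    have hl0 : Real.log s ≠ 0 := by linarith
    by_cases hA : a t s = 0
    · simp [hA]
    · simp only [Pi.div_apply]
      field_simp
  -- limit of the bracket
  have hsum : Tendsto (fun s => (K : ℝ) + ∑ j ∈ Finset.Icc 2 K, (K.choose j : ℝ) *
        ∏ t ∈ Finset.Icc 2 j, B t s / a t s) atTop
      (nhds ((K:ℝ) + ∑ j ∈ Finset.Icc 2 K, (K.choose j : ℝ) *
        ∏ t ∈ Finset.Icc 2 j, (((t:ℝ) - 1) / ((K:ℝ) - (t:ℝ) + 1)))) := by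
    apply Tendsto.const_add
    apply tendsto_finset_sum
    intro j hj
    apply Tendsto.const_mul
    apply tendsto_finset_prod
    intro t ht
    rw [Finset.mem_Icc] at hj ht
    exact hratio t (Finset.mem_Icc.mpr ⟨ht.1, le_trans ht.2 hj.2⟩)
  -- value of the bracket limit
  have hval : (K:ℝ) + ∑ j ∈ Finset.Icc 2 K, (K.choose j : ℝ) *
        ∏ t ∈ Finset.Icc 2 j, (((t:ℝ) - 1) / ((K:ℝ) - (t:ℝ) + 1))
      = (K:ℝ) * ∑ j ∈ Finset.Icc 1 K, (1 : ℝ) / (j:ℝ) := by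
    have hterm : ∀ j ∈ Finset.Icc 2 K, (K.choose j : ℝ) *
        ∏ t ∈ Finset.Icc 2 j, (((t:ℝ) - 1) / ((K:ℝ) - (t:ℝ) + 1)) = (K:ℝ) * (1 / (j:ℝ)) := by
      intro j hj
      rw [Finset.mem_Icc] at hj
      rw [aux_prod K j (by omega) (by omega) hj.2]
      have hc : (K.choose j : ℝ) ≠ 0 := Nat.cast_ne_zero.mpr (Nat.choose_pos hj.2).ne'
      field_simp
    rw [Finset.sum_congr rfl hterm]
    have hsplit : Finset.Icc 1 K = insert 1 (Finset.Icc 2 K) := by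
      ext x
      simp only [Finset.mem_Icc, Finset.mem_insert]
      omega
    rw [hsplit, Finset.sum_insert (by simp), mul_add, ← Finset.mul_sum]
    push_cast
    ring
  have hS : (0:ℝ) < ∑ j ∈ Finset.Icc 1 K, (1 : ℝ) / (j:ℝ) := by
    apply Finset.sum_pos
    · intro j hj
      rw [Finset.mem_Icc] at hj
      have : (0:ℝ) < (j:ℝ) := by exact_mod_cast (by omega : 0 < j)
      positivity
    · exact ⟨1, Finset.mem_Icc.mpr ⟨le_refl 1, by omega⟩⟩
  have hK0 : (0:ℝ) < (K:ℝ) := by exact_mod_cast (by omega : 0 < K)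
  have hne : (K:ℝ) + ∑ j ∈ Finset.Icc 2 K, (K.choose j : ℝ) *
      ∏ t ∈ Finset.Icc 2 j, (((t:ℝ) - 1) / ((K:ℝ) - (t:ℝ) + 1)) ≠ 0 := by
    rw [hval]; exact (mul_pos hK0 hS).ne'
  have ha1 := haL 1 (Finset.mem_Icc.mpr ⟨le_refl 1, by omega⟩)
  have final := (hsum.inv₀ hne).mul ha1
  have : ((K:ℝ) + ∑ j ∈ Finset.Icc 2 K, (K.choose j : ℝ) *
      ∏ t ∈ Finset.Icc 2 j, (((t:ℝ) - 1) / ((K:ℝ) - (t:ℝ) + 1)))⁻¹ * ((K:ℝ) - (1:ℕ) + 1)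
      = (∑ j ∈ Finset.Icc 1 K, (1 : ℝ) / (j:ℝ))⁻¹ := by
    rw [hval]
    push_cast
    rw [mul_inv]
    field_simp
    ring
  rw [this] at final
  simpa [mul_div_assoc] using final
end
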